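/- Let L ≥ 1, let B, B̃ ∈ ℝ^{L×L}, and let ψ, ψ̃ ∈ ℝ with ψ̃ ≠ 0. Suppose θ ∈ ℂ and (v; w) ∈ ℂ^{2L} is a nonzero vector with [[B, ψI],[−ψI, Bᵀ]] (v; w) = θ [[B̃, ψ̃I],[−ψ̃I, B̃ᵀ]] (v; w), and suppose ψ − θψ̃ ≠ 0. Then v ≠ 0 and |1 − θ|² = (v*((B−B̃)ᵀ(B−B̃) + (ψ−ψ̃)² I)v) / (v*(B̃ᵀB̃ + ψ̃² I)v), where the denominator is strictly positive. -/

import Mathlib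

open Matrix

/-- The tracking block matrix [[B, ψI],[−ψI, Bᵀ]]. -/
def trackingBlock (L : ℕ) (B : Matrix (Fin L) (Fin L) ℝ) (ψ : ℝ) :
    Matrix (Fin L ⊕ Fin L) (Fin L ⊕ Fin L) ℝ :=
  Matrix.fromBlocks B (ψ • (1 : Matrix (Fin L) (Fin L) ℝ))
    (-(ψ • (1 : Matrix (Fin L) (Fin L) ℝ))) Bᵀ

section Helpers

variable {L : ℕ}

private lemma map_mulVec_star (A : Matrix (Fin L) (Fin L) ℝ) (x : Fin L → ℂ) :
    (A.map (Complex.ofReal)) *ᵥ (star x) = star ((A.map Complex.ofReal) *ᵥ x) := by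
  funext i
  simp [Matrix.mulVec, dotProduct, Matrix.map_apply, map_sum, mul_comm]

private lemma star_dot_self (x : Fin L → ℂ) :
    star x ⬝ᵥ x = ((∑ i, Complex.normSq (x i) : ℝ) : ℂ) := by
  push_cast
  simp [dotProduct, Complex.normSq_eq_conj_mul_self]

private lemma sum_normSq_pos {x : Fin L → ℂ} (hx : x ≠ 0) :
    0 < ∑ i, Complex.normSq (x i) := by
  rcases Function.ne_iff.mp hx with ⟨i, hi⟩
  exact Finset.sum_pos' (fun j _ => Complex.normSq_nonneg _)
    ⟨i, Finset.mem_univ i, Complex.normSq_pos.mpr hi⟩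

private lemma dot_transpose (A : Matrix (Fin L) (Fin L) ℝ) (x y : Fin L → ℂ) :
    star x ⬝ᵥ ((A.map Complex.ofReal)ᵀ *ᵥ y) = star ((A.map Complex.ofReal) *ᵥ x) ⬝ᵥ y := by
  rw [Matrix.dotProduct_mulVec, Matrix.vecMul_transpose, map_mulVec_star]

private lemma quad_nonneg (x y : Fin L → ℂ) (p : ℝ) :
    0 ≤ (∑ i, Complex.normSq (x i)) - 2*p*(star x ⬝ᵥ y).re
        + p^2 * (∑ i, Complex.normSq (y i)) := by
  have key : (0:ℝ) ≤ ∑ i, Complex.normSq (x i - (p:ℂ) * y i) :=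
    Finset.sum_nonneg fun i _ => Complex.normSq_nonneg _
  have expand : ∑ i, Complex.normSq (x i - (p:ℂ) * y i)
      = (∑ i, Complex.normSq (x i)) - 2*p*(star x ⬝ᵥ y).re
        + p^2 * (∑ i, Complex.normSq (y i)) := by
    have hre : (star x ⬝ᵥ y).re = ∑ i, ((starRingEnd ℂ) (x i) * y i).re := by
      simp [dotProduct, Complex.re_sum]
    rw [hre, Finset.mul_sum, Finset.mul_sum, ← Finset.sum_sub_distrib,
      ← Finset.sum_add_distrib]
    refine Finset.sum_congr rfl fun i _ => ?_
    simp [Complex.normSq_apply, Complex.sub_re, Complex.sub_im, Complex.mul_re,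
      Complex.mul_im]
    ring
  linarith [expand ▸ key]

private lemma dot_quad (A : Matrix (Fin L) (Fin L) ℝ) (r : ℝ) (x : Fin L → ℂ) :
    star x ⬝ᵥ (((Aᵀ * A + r • (1 : Matrix (Fin L) (Fin L) ℝ)).map Complex.ofReal) *ᵥ x)
      = star ((A.map Complex.ofReal) *ᵥ x) ⬝ᵥ ((A.map Complex.ofReal) *ᵥ x)
        + (r:ℂ) * (star x ⬝ᵥ x) := by
  have hmapadd : ((Aᵀ*A + r • (1 : Matrix (Fin L) (Fin L) ℝ)).map Complex.ofReal)
      = (A.map Complex.ofReal)ᵀ * (A.map Complex.ofReal)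
        + (r:ℂ) • (1 : Matrix (Fin L) (Fin L) ℂ) := by
    ext i j
    simp [Matrix.map_apply, Matrix.add_apply, Matrix.mul_apply, Matrix.smul_apply,
      Matrix.one_apply, Matrix.transpose_apply, apply_ite Complex.ofReal]
  rw [hmapadd, Matrix.add_mulVec, dotProduct_add, Matrix.smul_mulVec,
    Matrix.one_mulVec, dotProduct_smul, ← Matrix.mulVec_mulVec, dot_transpose]
  simp [smul_eq_mul]

end Helpers

theorem tracking_generalized_eigenvalue_identity
    (L : ℕ) (hL : 1 ≤ L) (B Bt : Matrix (Fin L) (Fin L) ℝ) (ψ ψt : ℝ) (hψt : ψt ≠ 0)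
    (θ : ℂ) (v w : Fin L → ℂ) (hvw : Sum.elim v w ≠ 0)
    (heig : ((trackingBlock L B ψ).map Complex.ofReal).mulVec (Sum.elim v w) =
      θ • ((trackingBlock L Bt ψt).map Complex.ofReal).mulVec (Sum.elim v w))
    (hdenom : (ψ : ℂ) - θ * (ψt : ℂ) ≠ 0) :
    v ≠ 0 ∧
    ∃ d : ℝ, 0 < d ∧
      (d : ℂ) = star v ⬝ᵥ ((Btᵀ * Bt + ψt ^ 2 • (1 : Matrix (Fin L) (Fin L) ℝ)).map
          Complex.ofReal).mulVec v ∧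
      (‖1 - θ‖ ^ 2 : ℂ) =
        (star v ⬝ᵥ (((B - Bt)ᵀ * (B - Bt) + (ψ - ψt) ^ 2 • (1 : Matrix (Fin L) (Fin L) ℝ)).map
          Complex.ofReal).mulVec v) / (d : ℂ) := by
  classical
  set Bc := B.map (Complex.ofReal) with hBcdef
  set Btc := Bt.map (Complex.ofReal) with hBtcdef
  have hmap : ∀ (A : Matrix (Fin L) (Fin L) ℝ) (r : ℝ),
      (trackingBlock L A r).map Complex.ofReal =
        Matrix.fromBlocks (A.map Complex.ofReal) ((r:ℂ) • 1)
          (-((r:ℂ) • 1)) ((A.map Complex.ofReal)ᵀ) := by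
    intro A r
    have hsm : ((r • (1 : Matrix (Fin L) (Fin L) ℝ)).map Complex.ofReal)
        = ((r:ℂ) • (1 : Matrix (Fin L) (Fin L) ℂ)) := by
      ext i j
      simp [Matrix.map_apply, Matrix.smul_apply, Matrix.one_apply, apply_ite Complex.ofReal]
    have hneg : ((-(r • (1 : Matrix (Fin L) (Fin L) ℝ))).map Complex.ofReal)
        = -((r:ℂ) • (1 : Matrix (Fin L) (Fin L) ℂ)) := by
      ext i j
      simp [Matrix.map_apply, Matrix.smul_apply, Matrix.one_apply, apply_ite Complex.ofReal]
    unfold trackingBlock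
    rw [Matrix.fromBlocks_map, hsm, hneg, Matrix.transpose_map]
  rw [hmap, hmap, Matrix.fromBlocks_mulVec, Matrix.fromBlocks_mulVec] at heig
  have h1 : ∀ i, (Bc *ᵥ v) i + ψ * w i = θ * ((Btc *ᵥ v) i + ψt * w i) := by
    intro i
    have := congrFun heig (Sum.inl i)
    simpa [Matrix.smul_mulVec, Matrix.one_mulVec, Sum.elim_comp_inl,
      Sum.elim_comp_inr, mul_add] using this
  have h2 : ∀ i, -(ψ * v i) + (Bcᵀ *ᵥ w) i = θ * (-(ψt * v i) + (Btcᵀ *ᵥ w) i) := by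
    intro i
    have := congrFun heig (Sum.inr i)
    simpa [Matrix.smul_mulVec, Matrix.one_mulVec, Matrix.neg_mulVec,
      Sum.elim_comp_inl, Sum.elim_comp_inr, mul_add] using this
  set u := Bc *ᵥ v with hudef
  set ut := Btc *ᵥ v with hutdef
  set c : ℂ := (ψ:ℂ) - θ * ψt with hc
  have hcne : c ≠ 0 := hdenom
  -- first block equation as a vector identity
  have hzf : u - θ • ut = (-c) • w := by
    funext i
    have := h1 i
    simp only [Pi.sub_apply, Pi.smul_apply, smul_eq_mul, neg_smul, Pi.neg_apply, hc]
    ring_nf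
    linear_combination this
  -- v ≠ 0
  have hv : v ≠ 0 := by
    intro h
    have hu0 : u = 0 := by rw [hudef, h, Matrix.mulVec_zero]
    have hut0 : ut = 0 := by rw [hutdef, h, Matrix.mulVec_zero]
    have hw0 : w = 0 := by
      have : (-c) • w = 0 := by rw [← hzf, hu0, hut0]; simp
      rcases smul_eq_zero.mp this with h' | h'
      · exact absurd (neg_eq_zero.mp h') hcne
      · exact h'
    apply hvw
    funext x
    cases x <;> simp [h, hw0]
  -- second block equation
  have h2f : Bcᵀ *ᵥ w - θ • (Btcᵀ *ᵥ w) = c • v := by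
    funext i
    have := h2 i
    simp only [Pi.sub_apply, Pi.smul_apply, smul_eq_mul, hc]
    linear_combination this
  -- dot the second equation with star v
  have hd2 : star u ⬝ᵥ w - θ * (star ut ⬝ᵥ w) = c * (star v ⬝ᵥ v) := by
    have := congrArg (fun z => star v ⬝ᵥ z) h2f
    simpa [dotProduct_sub, dotProduct_smul, smul_eq_mul,
      dot_transpose, ← hudef, ← hutdef, hBcdef, hBtcdef] using this
  -- key bilinear identity
  have hmain : star u ⬝ᵥ u - θ * (star u ⬝ᵥ ut) - θ * (star ut ⬝ᵥ u)
      + θ^2 * (star ut ⬝ᵥ ut) = -(c^2) * (star v ⬝ᵥ v) := by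
    have e1 : (star u - θ • star ut) ⬝ᵥ (u - θ • ut)
        = star u ⬝ᵥ u - θ * (star u ⬝ᵥ ut) - θ * (star ut ⬝ᵥ u)
          + θ^2 * (star ut ⬝ᵥ ut) := by
      simp [sub_dotProduct, dotProduct_sub, smul_dotProduct,
        dotProduct_smul, smul_eq_mul]
      ring
    have e2 : (star u - θ • star ut) ⬝ᵥ ((-c) • w)
        = (-c) * (star u ⬝ᵥ w - θ * (star ut ⬝ᵥ w)) := by
      simp [sub_dotProduct, smul_dotProduct, dotProduct_smul,
        smul_eq_mul]
    rw [← e1, hzf, e2, hd2]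
    ring
  -- real quantities
  set ru := ∑ i, Complex.normSq (u i) with hru
  set rut := ∑ i, Complex.normSq (ut i) with hrut
  set rv := ∑ i, Complex.normSq (v i) with hrv
  set β := (star u ⬝ᵥ ut).re with hβ
  have hdotu : star u ⬝ᵥ u = (ru:ℂ) := star_dot_self u
  have hdotut : star ut ⬝ᵥ ut = (rut:ℂ) := star_dot_self ut
  have hdotv : star v ⬝ᵥ v = (rv:ℂ) := star_dot_self v
  have hcross : star u ⬝ᵥ ut + star ut ⬝ᵥ u = ((2*β : ℝ) : ℂ) := by
    have h1 : star ut ⬝ᵥ u = star (star u ⬝ᵥ ut) := Matrix.star_dotProduct ut u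
    rw [h1]
    rw [Complex.star_def, Complex.add_conj]
  set a : ℝ := ru + ψ^2 * rv with ha
  set b : ℝ := 2*β + 2*ψ*ψt*rv with hb
  set c₀ : ℝ := rut + ψt^2 * rv with hc₀
  have key : (a:ℂ) - θ * (b:ℂ) + θ^2 * (c₀:ℂ) = 0 := by
    push_cast [ha, hb, hc₀]
    have hc2 : c^2 = (ψ:ℂ)^2 - 2*θ*ψ*ψt + θ^2*ψt^2 := by rw [hc]; ring
    have hcross' : star u ⬝ᵥ ut + star ut ⬝ᵥ u = 2*(β:ℂ) := by
      push_cast at hcross; exact hcross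
    linear_combination hmain - hdotu - θ^2 * hdotut + θ * hcross'
      - ((ψ:ℂ)^2 - 2*θ*ψ*ψt + θ^2*ψt^2) * hdotv - (star v ⬝ᵥ v) * hc2
  have hrvpos : 0 < rv := sum_normSq_pos hv
  have hrutnn : 0 ≤ rut := Finset.sum_nonneg fun i _ => Complex.normSq_nonneg _
  have hψt2 : 0 < ψt^2 := lt_of_le_of_ne (sq_nonneg _) (Ne.symm (pow_ne_zero 2 hψt))
  have hc₀pos : 0 < c₀ := by rw [hc₀]; nlinarith
  set p := θ.re with hp
  set q := θ.im with hqdef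
  obtain ⟨kre, kim⟩ := Complex.ext_iff.mp key
  simp only [Complex.add_re, Complex.sub_re, Complex.mul_re, Complex.mul_im,
    Complex.add_im, Complex.sub_im, Complex.ofReal_re, Complex.ofReal_im, pow_two,
    Complex.zero_re, Complex.zero_im, ← hp, ← hqdef] at kre kim
  -- θ cannot be real
  have hq : q ≠ 0 := by
    intro hq0
    have hθ : θ = (p:ℂ) := Complex.ext (by simp [hp]) (by simpa [hqdef] using hq0)
    have hψpne : ψ - p * ψt ≠ 0 := by
      intro hcontra
      apply hcne
      have : c = ((ψ - p*ψt : ℝ) : ℂ) := by rw [hc, hθ]; push_cast; ring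
      rw [this, hcontra]
      simp
    have hquad := quad_nonneg u ut p
    rw [← hru, ← hrut, ← hβ] at hquad
    have hsqpos : 0 < (ψ - p*ψt)^2 * rv :=
      mul_pos (lt_of_le_of_ne (sq_nonneg _) (Ne.symm (pow_ne_zero 2 hψpne))) hrvpos
    rw [hq0] at kre
    rw [ha, hb, hc₀] at kre
    nlinarith [kre, hquad, hsqpos]
  have hbeq : b = 2*p*c₀ := by
    apply mul_left_cancel₀ hq
    linear_combination -kim
  have haeq : a = (p^2 + q^2) * c₀ := by
    linear_combination kre + p * hbeq
  refine ⟨hv, c₀, hc₀pos, ?_, ?_⟩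
  · rw [dot_quad, ← hBtcdef, ← hutdef, hdotut, hdotv, hc₀]
    push_cast
    ring
  · have hc₀ne : (c₀:ℂ) ≠ 0 := Complex.ofReal_ne_zero.mpr (ne_of_gt hc₀pos)
    rw [eq_div_iff hc₀ne]
    have hmapsub : (B - Bt).map Complex.ofReal = Bc - Btc := by
      ext i j
      simp [Matrix.map_apply, Matrix.sub_apply, hBcdef, hBtcdef]
    have hN : star v ⬝ᵥ (((B - Bt)ᵀ * (B - Bt) + (ψ - ψt) ^ 2
          • (1 : Matrix (Fin L) (Fin L) ℝ)).map Complex.ofReal) *ᵥ v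
        = ((a - b + c₀ : ℝ) : ℂ) := by
      rw [dot_quad, hmapsub, Matrix.sub_mulVec, ← hudef, ← hutdef, hdotv]
      have hdiff : star (u - ut) ⬝ᵥ (u - ut)
          = star u ⬝ᵥ u - (star u ⬝ᵥ ut + star ut ⬝ᵥ u) + star ut ⬝ᵥ ut := by
        simp [sub_dotProduct, dotProduct_sub, star_sub]
        ring
      rw [hdiff, hdotu, hdotut, hcross, ha, hb, hc₀]
      push_cast
      ring
    rw [hN]
    have habs : ‖1 - θ‖ ^ 2 = (1-p)^2 + q^2 := by
      rw [Complex.sq_norm, Complex.normSq_apply]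
      simp only [Complex.sub_re, Complex.sub_im, Complex.one_re, Complex.one_im,
        ← hp, ← hqdef]
      ring
    have hfinal : ‖1 - θ‖ ^ 2 * c₀ = a - b + c₀ := by
      rw [habs]
      linear_combination hbeq - haeq
    push_cast
    exact_mod_cast congrArg Complex.ofReal hfinal
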